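/- arXiv:hep-th/9407191 — 2 statements merged into one kernel-verified Lean document; each statement's English description precedes it below -/
import Mathlib

section
/- For every nonnegative integer n, ∑_{r∈ℤ} (-1)^r q^{r(5r+1)/2 - 2r} [n choose ⌊(n-5r)/2⌋+1]_q = ∑_{j≥0, 2j≤n-1} q^{j²+j} [n-j-1 choose j]_q (a polynomial identity in q). -/
open PowerSeries Finset

/-- `∏_{j=1}^m (1 - q^{a j})`, the q-Pochhammer `(q^a; q^a)_m` as a power series in `q = X`. -/
noncomputable def qpochA (a m : ℕ) : PowerSeries ℚ :=
  ∏ j ∈ Finset.range m, (1 - (PowerSeries.X : PowerSeries ℚ) ^ (a * (j + 1)))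

/-- `(q)_m = ∏_{j=1}^m (1 - q^j)`. -/
noncomputable def qpoch (m : ℕ) : PowerSeries ℚ := qpochA 1 m

/-- Gaussian binomial `[N choose M]_{q^a}`: `(q^a)_N / ((q^a)_M (q^a)_{N-M})` when
`0 ≤ M ≤ N`, and `0` otherwise. -/
noncomputable def qbinomA (a : ℕ) (N M : ℤ) : PowerSeries ℚ :=
  if 0 ≤ M ∧ M ≤ N then
    qpochA a N.toNat * (qpochA a M.toNat)⁻¹ * (qpochA a (N - M).toNat)⁻¹
  else 0

/-- Gaussian binomial `[N choose M]_q`. -/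
noncomputable def qbinom (N M : ℤ) : PowerSeries ℚ := qbinomA 1 N M

lemma qpoch_succ (m : ℕ) : qpoch (m+1) = qpoch m * (1 - X^(m+1)) := by
  simp [qpoch, qpochA, Finset.prod_range_succ]

lemma qpoch_zero : qpoch 0 = 1 := by simp [qpoch, qpochA]

lemma constCoeff_qpoch (m : ℕ) : PowerSeries.constantCoeff (R := ℚ) (qpoch m) = 1 := by
  induction m with
  | zero => simp [qpoch_zero]
  | succ k ih => simp [qpoch_succ, ih, map_mul, map_sub, map_pow]

lemma qpoch_ne_zero (m : ℕ) : qpoch m ≠ 0 := by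
  intro h
  have := constCoeff_qpoch m
  rw [h] at this; simp at this

lemma qpoch_mul_inv (m : ℕ) : qpoch m * (qpoch m)⁻¹ = 1 :=
  PowerSeries.mul_inv_cancel _ (by rw [constCoeff_qpoch]; norm_num)

lemma qbinom_eq (N M : ℤ) (h : 0 ≤ M ∧ M ≤ N) :
    qbinom N M = qpoch N.toNat * (qpoch M.toNat)⁻¹ * (qpoch (N-M).toNat)⁻¹ := by
  simp [qbinom, qbinomA, qpoch, h]

lemma qbinom_zero (N M : ℤ) (h : ¬ (0 ≤ M ∧ M ≤ N)) : qbinom N M = 0 := by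
  simp [qbinom, qbinomA, h]

lemma qbinom_bot_zero (N : ℤ) (h : 0 ≤ N) : qbinom N 0 = 1 := by
  rw [qbinom_eq N 0 ⟨le_refl 0, h⟩]
  simp [qpoch_zero]
  exact qpoch_mul_inv _

lemma qbinom_top (N : ℤ) (h : 0 ≤ N) : qbinom N N = 1 := by
  rw [qbinom_eq N N ⟨h, le_refl N⟩]
  simp [qpoch_zero, qpoch_mul_inv]

lemma qpoch_inv_mul (m : ℕ) : (qpoch m)⁻¹ * qpoch m = 1 := by
  rw [mul_comm ((qpoch m)⁻¹)]; exact qpoch_mul_inv m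

lemma qpoch_inv_succ (m : ℕ) : (qpoch m)⁻¹ = (1 - X^(m+1)) * (qpoch (m+1))⁻¹ := by
  refine mul_right_cancel₀ (qpoch_ne_zero m) ?_
  rw [qpoch_inv_mul]
  symm
  calc (1 - X^(m+1)) * (qpoch (m+1))⁻¹ * qpoch m
      = qpoch (m+1) * (qpoch (m+1))⁻¹ := by rw [qpoch_succ]; ring
    _ = 1 := qpoch_mul_inv _

lemma pascal_coreA (s t : ℕ) :
    qpoch (s+t+2) * (qpoch (s+1))⁻¹ * (qpoch (t+1))⁻¹ =
      qpoch (s+t+1) * (qpoch (s+1))⁻¹ * (qpoch t)⁻¹ +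
      X^(t+1) * (qpoch (s+t+1) * (qpoch s)⁻¹ * (qpoch (t+1))⁻¹) := by
  rw [qpoch_inv_succ s, qpoch_inv_succ t, qpoch_succ (s+t+1)]
  ring

lemma pascal_coreB (s t : ℕ) :
    qpoch (s+t+2) * (qpoch (s+1))⁻¹ * (qpoch (t+1))⁻¹ =
      X^(s+1) * (qpoch (s+t+1) * (qpoch (s+1))⁻¹ * (qpoch t)⁻¹) +
      qpoch (s+t+1) * (qpoch s)⁻¹ * (qpoch (t+1))⁻¹ := by
  rw [qpoch_inv_succ s, qpoch_inv_succ t, qpoch_succ (s+t+1)]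
  ring

lemma pascalA (N M : ℤ) (hN : 1 ≤ N) :
    qbinom N M = qbinom (N-1) M + X^((N-M).toNat) * qbinom (N-1) (M-1) := by
  by_cases h0 : 0 ≤ M
  · by_cases hM : M ≤ N
    · by_cases hMN : M = N
      · subst hMN
        rw [qbinom_top M h0, qbinom_zero (M-1) M (by omega), qbinom_top (M-1) (by omega)]
        simp
      · have hM' : M ≤ N - 1 := by omega
        by_cases hM0 : M = 0
        · subst hM0
          rw [qbinom_bot_zero N (by omega), qbinom_bot_zero (N-1) (by omega),
            qbinom_zero (N-1) (0-1) (by omega)]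
          simp
        · set s := (M-1).toNat with hs
          set t := (N-M-1).toNat with ht
          have e1 : N.toNat = s + t + 2 := by omega
          have e2 : M.toNat = s + 1 := by omega
          have e3 : (N-M).toNat = t + 1 := by omega
          have e4 : (N-1).toNat = s + t + 1 := by omega
          have e5 : (M-1).toNat = s := by omega
          have e6 : (N-1-M).toNat = t := by omega
          have e7 : (N-1-(M-1)).toNat = t + 1 := by omega
          rw [qbinom_eq N M ⟨h0, hM⟩, qbinom_eq (N-1) M ⟨h0, hM'⟩,
            qbinom_eq (N-1) (M-1) ⟨by omega, by omega⟩, e1, e2, e3, e4, e5, e6, e7]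
          exact pascal_coreA s t
    · rw [qbinom_zero N M (by omega), qbinom_zero (N-1) M (by omega),
        qbinom_zero (N-1) (M-1) (by omega)]
      simp
  · rw [qbinom_zero N M (by omega), qbinom_zero (N-1) M (by omega),
      qbinom_zero (N-1) (M-1) (by omega)]
    simp

lemma pascalB (N M : ℤ) (hN : 1 ≤ N) :
    qbinom N M = X^(M.toNat) * qbinom (N-1) M + qbinom (N-1) (M-1) := by
  by_cases h0 : 0 ≤ M
  · by_cases hM : M ≤ N
    · by_cases hMN : M = N
      · subst hMN
        rw [qbinom_top M h0, qbinom_zero (M-1) M (by omega), qbinom_top (M-1) (by omega)]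
        simp
      · have hM' : M ≤ N - 1 := by omega
        by_cases hM0 : M = 0
        · subst hM0
          rw [qbinom_bot_zero N (by omega), qbinom_bot_zero (N-1) (by omega),
            qbinom_zero (N-1) (0-1) (by omega)]
          simp
        · set s := (M-1).toNat with hs
          set t := (N-M-1).toNat with ht
          have e1 : N.toNat = s + t + 2 := by omega
          have e2 : M.toNat = s + 1 := by omega
          have e4 : (N-1).toNat = s + t + 1 := by omega
          have e5 : (M-1).toNat = s := by omega
          have e6 : (N-1-M).toNat = t := by omega
          have e7 : (N-1-(M-1)).toNat = t + 1 := by omega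
          have e3 : (N-M).toNat = t + 1 := by omega
          rw [qbinom_eq N M ⟨h0, hM⟩, qbinom_eq (N-1) M ⟨h0, hM'⟩,
            qbinom_eq (N-1) (M-1) ⟨by omega, by omega⟩, e1, e2, e3, e4, e5, e6, e7]
          exact pascal_coreB s t
    · rw [qbinom_zero N M (by omega), qbinom_zero (N-1) M (by omega),
        qbinom_zero (N-1) (M-1) (by omega)]
      simp
  · rw [qbinom_zero N M (by omega), qbinom_zero (N-1) M (by omega),
      qbinom_zero (N-1) (M-1) (by omega)]
    simp

/-! ### The summands -/

noncomputable def Aa (n : ℕ) (r : ℤ) : PowerSeries ℚ :=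
  (PowerSeries.C (R := ℚ)) ((-1 : ℚ) ^ r) *
    (PowerSeries.X : PowerSeries ℚ) ^ (r * (5 * r + 1) / 2 - 2 * r).toNat *
    qbinom n (Int.fdiv ((n : ℤ) - 5 * r) 2 + 1)

noncomputable def Gg (n : ℕ) (r : ℤ) : PowerSeries ℚ :=
  if ((n:ℤ) - 5*r) % 2 = 1 then
    (PowerSeries.C (R := ℚ)) ((-1 : ℚ) ^ r) *
      (PowerSeries.X : PowerSeries ℚ) ^
        ((r * (5 * r + 1) / 2 - 2 * r) + ((n:ℤ) - Int.fdiv ((n:ℤ) - 5*r - 1) 2)).toNat *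
      qbinom n (Int.fdiv ((n:ℤ) - 5*r - 1) 2)
  else 0

lemma w_facts (r : ℤ) : ∃ w : ℤ, r * (5 * r + 1) / 2 - 2 * r = w ∧
    2*w = 5*(r*r) - 3*r ∧ 0 ≤ w := by
  have h2 : ∃ c : ℤ, r * (5 * r + 1) = 2 * c := by
    rcases Int.even_or_odd r with ⟨u,hu⟩|⟨u,hu⟩
    · exact ⟨u * (5*r+1), by rw [hu]; ring⟩
    · exact ⟨r * (5*u+3), by rw [hu]; ring⟩
  obtain ⟨c, hc⟩ := h2
  have hnn : 0 ≤ r * (r - 1) := by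
    rcases le_or_gt 1 r with h|h
    · exact mul_nonneg (by omega) (by omega)
    · have h2 := mul_nonneg (by omega : (0:ℤ) ≤ -r) (by omega : (0:ℤ) ≤ 1 - r)
      nlinarith [h2]
  refine ⟨c - 2*r, ?_, ?_, ?_⟩
  · rw [hc]; omega
  · have : 2*c = 5*(r*r) + r := by linear_combination -hc
    omega
  · nlinarith [hc, hnn]

set_option maxHeartbeats 1000000 in
lemma keyA (n : ℕ) (r : ℤ) :
    Aa (n+2) r = Aa (n+1) r + X^(n+1) * Aa n r + (Gg n r - Gg n (r-1)) := by
  obtain ⟨w, hwe, hw2, hw0⟩ := w_facts r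
  obtain ⟨w', hwe', hw2', hw0'⟩ := w_facts (r-1)
  have hrel : w' = w - 5*r + 4 := by
    have h3 : 2*w' - 2*w = -10*r + 8 := by linear_combination hw2' - hw2
    omega
  have hsign : ((-1:ℚ)) ^ (r-1) = -((-1:ℚ)) ^ r := by
    rw [zpow_sub_one₀ (by norm_num : (-1:ℚ) ≠ 0)]
    norm_num
  simp only [Aa, Gg]
  push_cast
  rcases Int.even_or_odd ((n:ℤ) - 5*r) with ⟨k,hk⟩|⟨k,hk⟩
  · -- even case : n - 5r = k + k
    rw [if_neg (by omega), if_pos (by omega)]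
    have hf1 : Int.fdiv ((n:ℤ) + 2 - 5*r) 2 + 1 = k + 2 := by
      rw [Int.fdiv_eq_ediv_of_nonneg _ (by norm_num)]; omega
    have hf2 : Int.fdiv ((n:ℤ) + 1 - 5*r) 2 + 1 = k + 1 := by
      rw [Int.fdiv_eq_ediv_of_nonneg _ (by norm_num)]; omega
    have hf3 : Int.fdiv ((n:ℤ) - 5*r) 2 + 1 = k + 1 := by
      rw [Int.fdiv_eq_ediv_of_nonneg _ (by norm_num)]; omega
    have hf4 : Int.fdiv ((n:ℤ) - 5*(r-1) - 1) 2 = k + 2 := by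
      rw [Int.fdiv_eq_ediv_of_nonneg _ (by norm_num)]; omega
    rw [hf1, hf2, hf3, hf4, hwe, hwe', hrel, hsign, map_neg]
    have p1 : qbinom ((n:ℤ)+2) (k+2)
        = X^((k+2).toNat) * qbinom ((n:ℤ)+1) (k+2) + qbinom ((n:ℤ)+1) (k+1) := by
      have h := pascalB ((n:ℤ)+2) (k+2) (by omega)
      have e1 : (n:ℤ)+2-1 = (n:ℤ)+1 := by ring
      have e2 : (k:ℤ)+2-1 = k+1 := by ring
      rw [e1, e2] at h; exact h
    have p2 : qbinom ((n:ℤ)+1) (k+2)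
        = qbinom (n:ℤ) (k+2) + X^(((n:ℤ)-k-1).toNat) * qbinom (n:ℤ) (k+1) := by
      have h := pascalA ((n:ℤ)+1) (k+2) (by omega)
      have e1 : (n:ℤ)+1-1 = (n:ℤ) := by ring
      have e2 : (k:ℤ)+2-1 = k+1 := by ring
      have e3 : ((n:ℤ)+1-(k+2)) = (n:ℤ)-k-1 := by ring
      rw [e1, e2, e3] at h; exact h
    rw [p1, p2]
    have haux1 : (X : PowerSeries ℚ)^((k+2).toNat) *
        ((X : PowerSeries ℚ)^(((n:ℤ)-k-1).toNat) * qbinom (n:ℤ) (k+1))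
        = X^(n+1) * qbinom (n:ℤ) (k+1) := by
      by_cases h : -2 ≤ k ∧ k ≤ (n:ℤ) - 1
      · rw [← mul_assoc, ← pow_add]; congr 2; omega
      · rw [qbinom_zero (n:ℤ) (k+1) (by omega)]; ring
    have haux2 : (X : PowerSeries ℚ)^(w.toNat) *
        ((X : PowerSeries ℚ)^((k+2).toNat) * qbinom (n:ℤ) (k+2))
        = X^((w - 5*r + 4 + ((n:ℤ) - (k+2))).toNat) * qbinom (n:ℤ) (k+2) := by
      by_cases h : 0 ≤ k + 2 ∧ k + 2 ≤ (n:ℤ)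
      · rw [← mul_assoc, ← pow_add]; congr 2; omega
      · rw [qbinom_zero (n:ℤ) (k+2) (by omega)]; ring
    linear_combination (PowerSeries.C (R := ℚ)) ((-1:ℚ)^r) * X ^ w.toNat * haux1 +
      (PowerSeries.C (R := ℚ)) ((-1:ℚ)^r) * haux2
  · -- odd case : n - 5r = 2k + 1
    rw [if_pos (by omega), if_neg (by omega)]
    have hf1 : Int.fdiv ((n:ℤ) + 2 - 5*r) 2 + 1 = k + 2 := by
      rw [Int.fdiv_eq_ediv_of_nonneg _ (by norm_num)]; omega
    have hf2 : Int.fdiv ((n:ℤ) + 1 - 5*r) 2 + 1 = k + 2 := by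
      rw [Int.fdiv_eq_ediv_of_nonneg _ (by norm_num)]; omega
    have hf3 : Int.fdiv ((n:ℤ) - 5*r) 2 + 1 = k + 1 := by
      rw [Int.fdiv_eq_ediv_of_nonneg _ (by norm_num)]; omega
    have hf4 : Int.fdiv ((n:ℤ) - 5*r - 1) 2 = k := by
      rw [Int.fdiv_eq_ediv_of_nonneg _ (by norm_num)]; omega
    rw [hf1, hf2, hf3, hf4, hwe]
    have p1 : qbinom ((n:ℤ)+2) (k+2)
        = qbinom ((n:ℤ)+1) (k+2) + X^(((n:ℤ)-k).toNat) * qbinom ((n:ℤ)+1) (k+1) := by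
      have h := pascalA ((n:ℤ)+2) (k+2) (by omega)
      have e1 : (n:ℤ)+2-1 = (n:ℤ)+1 := by ring
      have e2 : (k:ℤ)+2-1 = k+1 := by ring
      have e3 : ((n:ℤ)+2-(k+2)) = (n:ℤ)-k := by ring
      rw [e1, e2, e3] at h; exact h
    have p2 : qbinom ((n:ℤ)+1) (k+1)
        = X^((k+1).toNat) * qbinom (n:ℤ) (k+1) + qbinom (n:ℤ) k := by
      have h := pascalB ((n:ℤ)+1) (k+1) (by omega)
      have e1 : (n:ℤ)+1-1 = (n:ℤ) := by ring
      have e2 : (k:ℤ)+1-1 = k := by ring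
      rw [e1, e2] at h; exact h
    rw [p1, p2]
    have haux1 : (X : PowerSeries ℚ)^(((n:ℤ)-k).toNat) *
        ((X : PowerSeries ℚ)^((k+1).toNat) * qbinom (n:ℤ) (k+1))
        = X^(n+1) * qbinom (n:ℤ) (k+1) := by
      by_cases h : -1 ≤ k ∧ k ≤ (n:ℤ)
      · rw [← mul_assoc, ← pow_add]; congr 2; omega
      · rw [qbinom_zero (n:ℤ) (k+1) (by omega)]; ring
    have haux2 : (X : PowerSeries ℚ)^(w.toNat) *
        ((X : PowerSeries ℚ)^(((n:ℤ)-k).toNat) * qbinom (n:ℤ) k)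
        = X^((w + ((n:ℤ) - k)).toNat) * qbinom (n:ℤ) k := by
      by_cases h : 0 ≤ k ∧ k ≤ (n:ℤ)
      · rw [← mul_assoc, ← pow_add]; congr 2; omega
      · rw [qbinom_zero (n:ℤ) k (by omega)]; ring
    linear_combination (PowerSeries.C (R := ℚ)) ((-1:ℚ)^r) * X ^ w.toNat * haux1 +
      (PowerSeries.C (R := ℚ)) ((-1:ℚ)^r) * haux2

/-! ### sums -/

noncomputable def Ss (n : ℕ) : PowerSeries ℚ := ∑ᶠ r : ℤ, Aa n r

noncomputable def Dd (n : ℕ) : PowerSeries ℚ :=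
  ∑ j ∈ Finset.range (n + 1),
    (PowerSeries.X : PowerSeries ℚ) ^ (j ^ 2 + j) * qbinom ((n : ℤ) - j - 1) j

lemma Aa_support (n : ℕ) : (Function.support (Aa n)).Finite := by
  apply Set.Finite.subset (Set.finite_Icc (-(n:ℤ)-2) ((n:ℤ)+2))
  intro r hr
  simp only [Function.mem_support] at hr
  by_contra hmem
  simp only [Set.mem_Icc, not_and_or, not_le] at hmem
  apply hr
  unfold Aa
  rw [qbinom_zero, mul_zero]
  rw [Int.fdiv_eq_ediv_of_nonneg _ (by norm_num)]
  omega

lemma Gg_support (n : ℕ) : (Function.support (Gg n)).Finite := by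
  apply Set.Finite.subset (Set.finite_Icc (-(n:ℤ)-2) ((n:ℤ)+2))
  intro r hr
  simp only [Function.mem_support] at hr
  by_contra hmem
  simp only [Set.mem_Icc, not_and_or, not_le] at hmem
  apply hr
  unfold Gg
  by_cases hodd : ((n:ℤ) - 5*r) % 2 = 1
  · rw [if_pos hodd, qbinom_zero, mul_zero]
    rw [Int.fdiv_eq_ediv_of_nonneg _ (by norm_num)]
    omega
  · rw [if_neg hodd]

lemma XAa_support (n : ℕ) (c : PowerSeries ℚ) :
    (Function.support (fun r => c * Aa n r)).Finite := by
  apply Set.Finite.subset (Aa_support n)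
  intro r hr
  simp only [Function.mem_support] at hr ⊢
  intro h; apply hr; rw [h, mul_zero]

lemma Gg_shift_support (n : ℕ) :
    (Function.support (fun r : ℤ => Gg n (r-1))).Finite := by
  have : (fun r : ℤ => Gg n (r-1)) = (Gg n) ∘ (fun r => r - 1) := rfl
  rw [this]
  apply Set.Finite.preimage _ (Gg_support n)
  exact Function.Injective.injOn (fun a b h => by omega)

lemma Gdiff_support (n : ℕ) :
    (Function.support (fun r : ℤ => Gg n r - Gg n (r-1))).Finite := by
  apply Set.Finite.subset ((Gg_support n).union (Gg_shift_support n))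
  intro r hr
  simp only [Function.mem_support] at hr
  by_contra h
  simp only [Set.mem_union, Function.mem_support, not_or, not_not] at h
  apply hr
  rw [h.1, h.2, sub_zero]

lemma Ss_rec (n : ℕ) : Ss (n+2) = Ss (n+1) + X^(n+1) * Ss n := by
  have h1 : Ss (n+2) = ∑ᶠ r : ℤ, (Aa (n+1) r + X^(n+1) * Aa n r + (Gg n r - Gg n (r-1))) :=
    finsum_congr (fun r => keyA n r)
  rw [h1]
  rw [finsum_add_distrib]
  · rw [finsum_add_distrib (Aa_support (n+1)) (XAa_support n _)]
    have hG : ∑ᶠ r : ℤ, (Gg n r - Gg n (r-1)) = 0 := by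
      rw [finsum_sub_distrib (Gg_support n) (Gg_shift_support n)]
      have : ∑ᶠ r : ℤ, Gg n (r-1) = ∑ᶠ r : ℤ, Gg n r := by
        have h := finsum_comp_equiv (Equiv.subRight (1:ℤ)) (f := Gg n)
        simpa [Equiv.subRight] using h
      rw [this, sub_self]
    rw [hG, add_zero]
    rw [← mul_finsum' _ _ (Aa_support n)]
    rfl
  · apply Set.Finite.subset ((Aa_support (n+1)).union (XAa_support n (X^(n+1))))
    intro r hr
    simp only [Function.mem_support] at hr
    by_contra h
    simp only [Set.mem_union, Function.mem_support, not_or, not_not] at h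
    apply hr
    rw [h.1, h.2, add_zero]
  · exact Gdiff_support n

lemma Dd_rec (n : ℕ) : Dd (n+2) = Dd (n+1) + X^(n+1) * Dd n := by
  have hD2 : Dd (n+2) = ∑ j ∈ Finset.range (n+1),
      (X : PowerSeries ℚ)^(j^2+j) * qbinom ((n:ℤ)+1-j) j := by
    unfold Dd
    rw [Finset.sum_range_succ, Finset.sum_range_succ]
    rw [qbinom_zero _ _ (by omega), qbinom_zero _ _ (by omega)]
    rw [mul_zero, mul_zero, add_zero, add_zero]
    apply Finset.sum_congr rfl
    intro j hj
    have e : ((n+2:ℕ):ℤ) - (j:ℤ) - 1 = (n:ℤ)+1-(j:ℤ) := by push_cast; ring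
    rw [e]
  have hD1 : Dd (n+1) = ∑ j ∈ Finset.range (n+1),
      (X : PowerSeries ℚ)^(j^2+j) * qbinom ((n:ℤ)-j) j := by
    unfold Dd
    rw [Finset.sum_range_succ]
    rw [qbinom_zero _ _ (by omega), mul_zero, add_zero]
    apply Finset.sum_congr rfl
    intro j hj
    have e : ((n+1:ℕ):ℤ) - (j:ℤ) - 1 = (n:ℤ)-(j:ℤ) := by push_cast; ring
    rw [e]
  have pas : ∀ j ∈ Finset.range (n+1),
      (X : PowerSeries ℚ)^(j^2+j) * qbinom ((n:ℤ)+1-j) j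
      = X^(j^2+j) * qbinom ((n:ℤ)-j) j
        + X^(j^2+j) * (X^(((n:ℤ)+1-2*j).toNat) * qbinom ((n:ℤ)-j) ((j:ℤ)-1)) := by
    intro j hj
    simp only [Finset.mem_range] at hj
    have h := pascalA ((n:ℤ)+1-j) j (by omega)
    have e1 : (n:ℤ)+1-j-1 = (n:ℤ)-j := by ring
    have e2 : ((n:ℤ)+1-j-j) = (n:ℤ)+1-2*j := by ring
    rw [e1, e2] at h
    rw [h]; ring
  have hsecond : ∑ j ∈ Finset.range (n+1),
      (X : PowerSeries ℚ)^(j^2+j) * (X^(((n:ℤ)+1-2*j).toNat) * qbinom ((n:ℤ)-j) ((j:ℤ)-1))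
      = X^(n+1) * Dd n := by
    rw [Finset.sum_range_succ']
    rw [qbinom_zero ((n:ℤ)-((0:ℕ):ℤ)) (((0:ℕ):ℤ)-1) (by omega)]
    rw [mul_zero, mul_zero, add_zero]
    unfold Dd
    rw [Finset.mul_sum, Finset.sum_range_succ]
    rw [qbinom_zero _ _ (by omega), mul_zero, mul_zero, add_zero]
    apply Finset.sum_congr rfl
    intro i hi
    simp only [Finset.mem_range] at hi
    have e1 : ((n:ℤ)-((i+1:ℕ):ℤ)) = (n:ℤ)-(i:ℤ)-1 := by push_cast; ring
    have e2 : (((i+1:ℕ)):ℤ) - 1 = (i:ℤ) := by push_cast; ring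
    rw [e1, e2]
    by_cases h : 2*i+1 ≤ n
    · have eT : (((n:ℤ)+1-2*((i+1:ℕ):ℤ))).toNat = n-1-2*i := by push_cast; omega
      rw [eT, ← mul_assoc, ← mul_assoc, ← pow_add, ← pow_add]
      congr 2
      obtain ⟨d, hd⟩ : ∃ d, n = 2*i+1+d := ⟨n-(2*i+1), by omega⟩
      subst hd
      rw [show 2*i+1+d-1-2*i = d from by omega]
      ring
    · rw [qbinom_zero ((n:ℤ)-(i:ℤ)-1) (i:ℤ) (by omega)]
      simp
  rw [hD2, Finset.sum_congr rfl pas, Finset.sum_add_distrib, hD1, hsecond]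

lemma D_filter (n : ℕ) :
    ∑ j ∈ (Finset.range (n+1)).filter (fun j => 2*j+1 ≤ n),
      (X : PowerSeries ℚ)^(j^2+j) * qbinom ((n:ℤ)-j-1) j = Dd n := by
  unfold Dd
  apply Finset.sum_filter_of_ne
  intro j hj hne
  by_contra hp
  apply hne
  rw [qbinom_zero _ _ (by omega), mul_zero]

lemma Ss_zero : Ss 0 = 0 := by
  unfold Ss
  have h : ∀ r : ℤ, Aa 0 r = 0 := by
    intro r; unfold Aa
    rw [qbinom_zero, mul_zero]
    rw [Int.fdiv_eq_ediv_of_nonneg _ (by norm_num)]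
    push_cast
    omega
  simp only [h, finsum_zero]

lemma Ss_one : Ss 1 = 1 := by
  unfold Ss
  rw [finsum_eq_single _ (0:ℤ)]
  · unfold Aa
    simp only [Nat.cast_one]
    rw [show (1:ℤ) - 5*(0:ℤ) = 1 by norm_num, show Int.fdiv (1:ℤ) 2 = 0 by decide,
      show (0:ℤ) + 1 = 1 by norm_num, qbinom_top 1 (by norm_num)]
    norm_num
  · intro r hr
    unfold Aa
    rw [qbinom_zero, mul_zero]
    rw [Int.fdiv_eq_ediv_of_nonneg _ (by norm_num)]
    push_cast
    omega

lemma Dd_zero : Dd 0 = 0 := by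
  unfold Dd
  rw [Finset.sum_range_one, qbinom_zero _ _ (by omega), mul_zero]

lemma Dd_one : Dd 1 = 1 := by
  unfold Dd
  rw [Finset.sum_range_succ, Finset.sum_range_one]
  have hc : ¬((0:ℤ) ≤ ((1:ℕ):ℤ) ∧ ((1:ℕ):ℤ) ≤ ((1:ℕ):ℤ) - ((1:ℕ):ℤ) - 1) := by omega
  have h1 : qbinom (((1:ℕ):ℤ) - ((1:ℕ):ℤ) - 1) ((1:ℕ):ℤ) = 0 := qbinom_zero _ _ hc
  have h2 : qbinom (((1:ℕ):ℤ) - ((0:ℕ):ℤ) - 1) ((0:ℕ):ℤ) = 1 := by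
    have e : ((1:ℕ):ℤ) - ((0:ℕ):ℤ) - 1 = 0 := by norm_num
    rw [e, Nat.cast_zero, qbinom_bot_zero 0 le_rfl]
  rw [h1, h2]
  norm_num

lemma mainSD (n : ℕ) : Ss n = Dd n := by
  induction n using Nat.twoStepInduction with
  | zero => rw [Ss_zero, Dd_zero]
  | one => rw [Ss_one, Dd_one]
  | more m ih1 ih2 => rw [Ss_rec, Dd_rec, ih1, ih2]

/-- Andrews' finitization of the second Rogers–Ramanujan identity:
`∑_{r∈ℤ} (-1)^r q^{r(5r+1)/2 - 2r} [n choose ⌊(n-5r)/2⌋+1]_q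
  = ∑_{j ≥ 0, 2j ≤ n-1} q^{j²+j} [n-j-1 choose j]_q`. -/
theorem rogersRamanujan_finitization_second (n : ℕ) :
    (∑ᶠ r : ℤ, (PowerSeries.C (R := ℚ)) ((-1 : ℚ) ^ r) *
        (PowerSeries.X : PowerSeries ℚ) ^ (r * (5 * r + 1) / 2 - 2 * r).toNat *
        qbinom n (Int.fdiv ((n : ℤ) - 5 * r) 2 + 1)) =
      ∑ j ∈ (Finset.range (n + 1)).filter (fun j => 2 * j + 1 ≤ n),
        (PowerSeries.X : PowerSeries ℚ) ^ (j ^ 2 + j) * qbinom ((n : ℤ) - j - 1) j := by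
  rw [D_filter]
  exact mainSD n
end

section
/- As formal power series, ∏_{n≥1, n even} (1+q^n) = ∑_{r≥0} q^{r²+r}/(q²;q²)_r, where (q²;q²)_r = ∏_{j=1}^r (1-q^{2j}). -/
open PowerSeries Finset

lemma constCoeff_qpochA (m : ℕ) : PowerSeries.constantCoeff (R := ℚ) (qpochA 2 m) = 1 := by
  simp [qpochA, map_prod]

lemma qpochA_ne (m : ℕ) : qpochA 2 m ≠ 0 := by
  intro h
  have := constCoeff_qpochA m
  rw [h] at this; simp at this

lemma qp_inv_mul (m : ℕ) : (qpochA 2 m)⁻¹ * qpochA 2 m = 1 :=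
  PowerSeries.inv_mul_cancel _ (by rw [constCoeff_qpochA]; norm_num)

lemma qp_zero : qpochA 2 0 = 1 := by simp [qpochA]

lemma qp_succ (m : ℕ) :
    qpochA 2 (m + 1) = qpochA 2 m * (1 - (X : PowerSeries ℚ) ^ (2 * (m + 1))) := by
  simp [qpochA, Finset.prod_range_succ]

lemma cancel3 (P : PowerSeries ℚ) (u v : ℕ) :
    P * (qpochA 2 u)⁻¹ * (qpochA 2 v)⁻¹ * (qpochA 2 u * qpochA 2 v) = P := by
  have h1 := qp_inv_mul u
  have h2 := qp_inv_mul v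
  linear_combination (P * (qpochA 2 v)⁻¹ * qpochA 2 v) * h1 + P * h2

/-- extended Gaussian binomial -/
noncomputable def Gd (N r : ℕ) : PowerSeries ℚ :=
  if r ≤ N then qpochA 2 N * (qpochA 2 r)⁻¹ * (qpochA 2 (N - r))⁻¹ else 0

lemma Gd_self (N : ℕ) : Gd N N = 1 := by
  rw [Gd, if_pos le_rfl]
  simp only [Nat.sub_self, qp_zero]
  have := cancel3 1 N 0
  rw [qp_zero] at this
  linear_combination this

lemma Gd_zero (N : ℕ) : Gd N 0 = 1 := by
  rw [Gd, if_pos (Nat.zero_le _)]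
  simp only [Nat.sub_zero, qp_zero]
  have h1 := qp_inv_mul N
  have h0 : ((1 : PowerSeries ℚ))⁻¹ = 1 := by
    have := PowerSeries.inv_mul_cancel (1 : PowerSeries ℚ) (by simp)
    simpa using this
  rw [h0]
  linear_combination h1

lemma pascal (N r : ℕ) (h1 : 1 ≤ r) (h2 : r ≤ N + 1) :
    Gd (N + 1) r = Gd N r + (X : PowerSeries ℚ) ^ (2 * (N + 1 - r)) * Gd N (r - 1) := by
  rcases eq_or_lt_of_le h2 with rfl | hlt
  · rw [Gd_self, Gd, if_neg (by omega), Nat.sub_self, Nat.add_sub_cancel, Gd_self]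
    simp
  · have hr : r ≤ N := by omega
    rw [Gd, if_pos h2, Gd, if_pos hr, Gd, if_pos (by omega : r - 1 ≤ N),
      show N - (r - 1) = N + 1 - r from by omega]
    apply mul_right_cancel₀ (b := qpochA 2 r * qpochA 2 (N + 1 - r))
      (mul_ne_zero (qpochA_ne _) (qpochA_ne _))
    have E1 := cancel3 (qpochA 2 (N + 1)) r (N + 1 - r)
    have hA2 : qpochA 2 (N + 1 - r) =
        qpochA 2 (N - r) * (1 - (X : PowerSeries ℚ) ^ (2 * (N + 1 - r))) := by
      rw [show N + 1 - r = (N - r) + 1 from by omega, qp_succ,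
        show 2 * ((N - r) + 1) = 2 * (N + 1 - r) from by omega]
    have hA3 : qpochA 2 r = qpochA 2 (r - 1) * (1 - (X : PowerSeries ℚ) ^ (2 * r)) := by
      conv_lhs => rw [show r = (r - 1) + 1 from by omega]
      rw [qp_succ, show 2 * ((r - 1) + 1) = 2 * r from by omega]
    have hA1 : qpochA 2 (N + 1) = qpochA 2 N * (1 - (X : PowerSeries ℚ) ^ (2 * (N + 1))) :=
      qp_succ N
    have hX : (X : PowerSeries ℚ) ^ (2 * (N + 1 - r)) * (X : PowerSeries ℚ) ^ (2 * r)
        = (X : PowerSeries ℚ) ^ (2 * (N + 1)) := by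
      rw [← pow_add]
      congr 1
      omega
    have E2 : (qpochA 2 N * (qpochA 2 r)⁻¹ * (qpochA 2 (N - r))⁻¹) *
        (qpochA 2 r * qpochA 2 (N + 1 - r)) =
        qpochA 2 N * (1 - (X : PowerSeries ℚ) ^ (2 * (N + 1 - r))) := by
      calc (qpochA 2 N * (qpochA 2 r)⁻¹ * (qpochA 2 (N - r))⁻¹) *
            (qpochA 2 r * qpochA 2 (N + 1 - r))
          = (qpochA 2 N * (1 - (X : PowerSeries ℚ) ^ (2 * (N + 1 - r)))) * (qpochA 2 r)⁻¹ *
            (qpochA 2 (N - r))⁻¹ * (qpochA 2 r * qpochA 2 (N - r)) := by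
            rw [hA2]; ring
        _ = _ := cancel3 _ r (N - r)
    have E3 : ((X : PowerSeries ℚ) ^ (2 * (N + 1 - r)) *
        (qpochA 2 N * (qpochA 2 (r - 1))⁻¹ * (qpochA 2 (N + 1 - r))⁻¹)) *
        (qpochA 2 r * qpochA 2 (N + 1 - r)) =
        (X : PowerSeries ℚ) ^ (2 * (N + 1 - r)) * (qpochA 2 N *
          (1 - (X : PowerSeries ℚ) ^ (2 * r))) := by
      calc ((X : PowerSeries ℚ) ^ (2 * (N + 1 - r)) *
            (qpochA 2 N * (qpochA 2 (r - 1))⁻¹ * (qpochA 2 (N + 1 - r))⁻¹)) *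
            (qpochA 2 r * qpochA 2 (N + 1 - r))
          = ((X : PowerSeries ℚ) ^ (2 * (N + 1 - r)) * (qpochA 2 N *
              (1 - (X : PowerSeries ℚ) ^ (2 * r)))) * (qpochA 2 (r - 1))⁻¹ *
              (qpochA 2 (N + 1 - r))⁻¹ * (qpochA 2 (r - 1) * qpochA 2 (N + 1 - r)) := by
            conv_lhs => rw [hA3]
            ring
        _ = _ := cancel3 _ (r - 1) (N + 1 - r)
    calc qpochA 2 (N + 1) * (qpochA 2 r)⁻¹ * (qpochA 2 (N + 1 - r))⁻¹ *
          (qpochA 2 r * qpochA 2 (N + 1 - r)) = qpochA 2 (N + 1) := E1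
      _ = qpochA 2 N * (1 - (X : PowerSeries ℚ) ^ (2 * (N + 1))) := hA1
      _ = qpochA 2 N * (1 - (X : PowerSeries ℚ) ^ (2 * (N + 1 - r))) +
          (X : PowerSeries ℚ) ^ (2 * (N + 1 - r)) *
          (qpochA 2 N * (1 - (X : PowerSeries ℚ) ^ (2 * r))) := by
          linear_combination (qpochA 2 N) * hX
      _ = _ := by rw [add_mul, E2, E3]

lemma finite_id (N : ℕ) :
    ∏ j ∈ Finset.range N, (1 + (X : PowerSeries ℚ) ^ (2 * (j + 1))) =
      ∑ r ∈ Finset.range (N + 1), (X : PowerSeries ℚ) ^ (r ^ 2 + r) * Gd N r := by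
  induction N with
  | zero => simp [Gd_zero]
  | succ N ih =>
    have key : ∀ r ∈ Finset.range (N + 1),
        (X : PowerSeries ℚ) ^ ((r + 1) ^ 2 + (r + 1)) * Gd (N + 1) (r + 1)
        = (X : PowerSeries ℚ) ^ ((r + 1) ^ 2 + (r + 1)) * Gd N (r + 1)
          + (X : PowerSeries ℚ) ^ (2 * (N + 1)) *
            ((X : PowerSeries ℚ) ^ (r ^ 2 + r) * Gd N r) := by
      intro r hr
      rw [Finset.mem_range] at hr
      rw [pascal N (r + 1) (by omega) (by omega),
        show N + 1 - (r + 1) = N - r from by omega,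
        show r + 1 - 1 = r from rfl, mul_add]
      congr 1
      rw [← mul_assoc, ← mul_assoc, ← pow_add, ← pow_add]
      congr 2
      obtain ⟨k, rfl⟩ : ∃ k, N = r + k := ⟨N - r, by omega⟩
      rw [show r + k - r = k from by omega]
      ring
    rw [Finset.prod_range_succ, ih,
      Finset.sum_range_succ' (fun r => (X : PowerSeries ℚ) ^ (r ^ 2 + r) * Gd (N + 1) r) (N + 1),
      Finset.sum_congr rfl key, Finset.sum_add_distrib, ← Finset.mul_sum]
    have h2 := Finset.sum_range_succ'
      (fun r => (X : PowerSeries ℚ) ^ (r ^ 2 + r) * Gd N r) (N + 1)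
    have h3 := Finset.sum_range_succ
      (fun r => (X : PowerSeries ℚ) ^ (r ^ 2 + r) * Gd N r) (N + 1)
    have h4 : Gd N (N + 1) = 0 := by rw [Gd, if_neg (by omega)]
    rw [h4] at h3
    rw [Gd_zero]
    rw [Gd_zero] at h2
    simp only [pow_zero, mul_one, zero_pow, mul_zero, add_zero] at h2 h3 ⊢
    linear_combination h2 - h3

lemma coeff_eq_of_dvd {d : ℕ} {A B : PowerSeries ℚ}
    (h : (X : PowerSeries ℚ) ^ (d + 1) ∣ A - B) :
    (PowerSeries.coeff (R := ℚ) d) A = (PowerSeries.coeff (R := ℚ) d) B := by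
  have := PowerSeries.X_pow_dvd_iff.mp h d (Nat.lt_succ_self d)
  rw [map_sub] at this
  linarith

lemma prod_one_dvd {M : ℕ} (s : Finset ℕ) (g : ℕ → PowerSeries ℚ)
    (h : ∀ j ∈ s, (X : PowerSeries ℚ) ^ M ∣ g j - 1) :
    (X : PowerSeries ℚ) ^ M ∣ (∏ j ∈ s, g j) - 1 := by
  classical
  induction s using Finset.induction_on with
  | empty => simp
  | @insert a s ha ih =>
    rw [Finset.prod_insert ha,
      show g a * ∏ j ∈ s, g j - 1
        = (g a - 1) * ∏ j ∈ s, g j + ((∏ j ∈ s, g j) - 1) from by ring]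
    exact dvd_add (Dvd.dvd.mul_right (h a (Finset.mem_insert_self a s)) _)
      (ih fun j hj => h j (Finset.mem_insert_of_mem hj))

lemma term_coeff (d r : ℕ) (hr : r ≤ d) :
    (PowerSeries.coeff (R := ℚ) d) ((X : PowerSeries ℚ) ^ (r ^ 2 + r) * Gd d r)
      = (PowerSeries.coeff (R := ℚ) d) ((X : PowerSeries ℚ) ^ (r ^ 2 + r) * (qpochA 2 r)⁻¹) := by
  set D : PowerSeries ℚ := ∏ j ∈ Finset.range r,
    (1 - (X : PowerSeries ℚ) ^ (2 * (d - r + j + 1))) with hD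
  have hsplit : qpochA 2 d = qpochA 2 (d - r) * D := by
    conv_lhs => rw [show d = (d - r) + r from by omega]
    rw [qpochA, Finset.prod_range_add]
    rfl
  have hGd : Gd d r = (qpochA 2 r)⁻¹ * D := by
    rw [Gd, if_pos hr, hsplit]
    linear_combination ((qpochA 2 r)⁻¹ * D) * qp_inv_mul (d - r)
  apply coeff_eq_of_dvd
  rw [hGd, show (X : PowerSeries ℚ) ^ (r ^ 2 + r) * ((qpochA 2 r)⁻¹ * D)
      - (X : PowerSeries ℚ) ^ (r ^ 2 + r) * (qpochA 2 r)⁻¹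
      = ((X : PowerSeries ℚ) ^ (r ^ 2 + r) * (D - 1)) * (qpochA 2 r)⁻¹ from by ring]
  apply Dvd.dvd.mul_right
  have hDdvd : (X : PowerSeries ℚ) ^ (2 * (d - r + 1)) ∣ D - 1 := by
    apply prod_one_dvd
    intro j hj
    rw [show (1 : PowerSeries ℚ) - (X : PowerSeries ℚ) ^ (2 * (d - r + j + 1)) - 1
      = -((X : PowerSeries ℚ) ^ (2 * (d - r + j + 1))) from by ring]
    exact (pow_dvd_pow _ (by omega)).neg_right
  have hle : d + 1 ≤ r ^ 2 + r + 2 * (d - r + 1) := by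
    have := Nat.le_self_pow (two_ne_zero) r
    omega
  calc (X : PowerSeries ℚ) ^ (d + 1)
      ∣ (X : PowerSeries ℚ) ^ (r ^ 2 + r + 2 * (d - r + 1)) := pow_dvd_pow _ hle
    _ = (X : PowerSeries ℚ) ^ (r ^ 2 + r) * (X : PowerSeries ℚ) ^ (2 * (d - r + 1)) := pow_add _ _ _
    _ ∣ (X : PowerSeries ℚ) ^ (r ^ 2 + r) * (D - 1) := mul_dvd_mul_left _ hDdvd

/-- Euler's identity (j = 1 case), coefficientwise:
`∏_{n ≥ 1 even} (1+q^n) = ∑_{r≥0} q^{r²+r}/(q²;q²)_r`.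
Factors with `n > d` and terms with `r > d` do not affect the coefficient of `q^d`. -/
theorem euler_even (d : ℕ) :
    (PowerSeries.coeff (R := ℚ) d)
        (∏ n ∈ (Finset.range (d + 1)).filter (fun n => 0 < n ∧ Even n),
          (1 + (PowerSeries.X : PowerSeries ℚ) ^ n)) =
      (PowerSeries.coeff (R := ℚ) d)
        (∑ r ∈ Finset.range (d + 1),
          (PowerSeries.X : PowerSeries ℚ) ^ (r ^ 2 + r) * (qpochA 2 r)⁻¹) := by

  have hset : (Finset.range (d + 1)).filter (fun n => 0 < n ∧ Even n)
      = (Finset.range (d / 2)).image (fun j => 2 * (j + 1)) := by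
    ext n
    simp only [Finset.mem_filter, Finset.mem_range, Finset.mem_image, Nat.even_iff]
    constructor
    · rintro ⟨h1, h2, h3⟩
      exact ⟨n / 2 - 1, by omega, by omega⟩
    · rintro ⟨j, hj, rfl⟩
      refine ⟨by omega, by omega, by omega⟩
  rw [hset, Finset.prod_image (fun a _ b _ h => by omega)]
  have hP : (PowerSeries.coeff (R := ℚ) d)
        (∏ j ∈ Finset.range (d / 2), (1 + (X : PowerSeries ℚ) ^ (2 * (j + 1))))
      = (PowerSeries.coeff (R := ℚ) d)
        (∏ j ∈ Finset.range d, (1 + (X : PowerSeries ℚ) ^ (2 * (j + 1)))) := by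
    refine (coeff_eq_of_dvd ?_).symm
    have hsplit : (∏ j ∈ Finset.range d, (1 + (X : PowerSeries ℚ) ^ (2 * (j + 1))))
        = (∏ j ∈ Finset.range (d / 2), (1 + (X : PowerSeries ℚ) ^ (2 * (j + 1)))) *
          ∏ j ∈ Finset.range (d - d / 2), (1 + (X : PowerSeries ℚ) ^ (2 * (d / 2 + j + 1))) := by
      conv_lhs => rw [show d = d / 2 + (d - d / 2) from by omega]
      rw [Finset.prod_range_add]
    rw [hsplit, show (∏ j ∈ Finset.range (d / 2), (1 + (X : PowerSeries ℚ) ^ (2 * (j + 1)))) *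
          (∏ j ∈ Finset.range (d - d / 2), (1 + (X : PowerSeries ℚ) ^ (2 * (d / 2 + j + 1))))
        - (∏ j ∈ Finset.range (d / 2), (1 + (X : PowerSeries ℚ) ^ (2 * (j + 1))))
        = (∏ j ∈ Finset.range (d / 2), (1 + (X : PowerSeries ℚ) ^ (2 * (j + 1)))) *
          ((∏ j ∈ Finset.range (d - d / 2), (1 + (X : PowerSeries ℚ) ^ (2 * (d / 2 + j + 1)))) - 1)
        from by ring]
    exact Dvd.dvd.mul_left (prod_one_dvd _ _ (fun j _ => by
      rw [show (1 : PowerSeries ℚ) + (X : PowerSeries ℚ) ^ (2 * (d / 2 + j + 1)) - 1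
        = (X : PowerSeries ℚ) ^ (2 * (d / 2 + j + 1)) from by ring]
      exact pow_dvd_pow _ (by omega))) _
  rw [hP, finite_id d, map_sum, map_sum]
  exact Finset.sum_congr rfl fun r hr =>
    term_coeff d r (by rw [Finset.mem_range] at hr; omega)
end
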